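/- Let X be a Banach space with property (*) (for real-valued functions, constant C₀), and let A, W ⊆ X be sets with d := dist(A, W) > 0. Then there exists a C¹ smooth function u : X → [0, 1] such that u = 1 on A, u = 0 on W, and Lip(u) ≤ 2C₀/d. -/

import Mathlib

open intervalIntegral MeasureTheory

noncomputable def psiAux (t : ℝ) : ℝ := 6 * (max 0 (min 1 t)) * (1 - max 0 (min 1 t))

lemma psiAux_cont : Continuous psiAux := by
  have hc : Continuous fun t : ℝ => max 0 (min 1 t) :=
    continuous_const.max (continuous_const.min continuous_id)
  exact ((continuous_const.mul hc).mul (continuous_const.sub hc))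

lemma psiAux_nonneg (t : ℝ) : 0 ≤ psiAux t := by
  unfold psiAux
  have h1 : 0 ≤ max 0 (min 1 t) := le_max_left _ _
  have h2 : max 0 (min 1 t) ≤ 1 := max_le zero_le_one (min_le_left _ _)
  nlinarith

lemma psiAux_le (t : ℝ) : psiAux t ≤ 3 / 2 := by
  unfold psiAux
  have h1 : 0 ≤ max 0 (min 1 t) := le_max_left _ _
  nlinarith [sq_nonneg (2 * max 0 (min 1 t) - 1)]

lemma psiAux_eq_zero_of_nonpos {t : ℝ} (ht : t ≤ 0) : psiAux t = 0 := by
  unfold psiAux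
  have : max 0 (min 1 t) = 0 := max_eq_left (le_trans (min_le_right _ _) ht)
  rw [this]; ring

lemma psiAux_eq_zero_of_one_le {t : ℝ} (ht : 1 ≤ t) : psiAux t = 0 := by
  unfold psiAux
  have : min 1 t = 1 := min_eq_left ht
  rw [this]
  have : max (0:ℝ) 1 = 1 := max_eq_right zero_le_one
  rw [this]; ring

noncomputable def qAux (t : ℝ) : ℝ := ∫ s in (0:ℝ)..t, psiAux s

lemma qAux_hasDerivAt (t : ℝ) : HasDerivAt qAux (psiAux t) t :=
  (psiAux_cont.integral_hasStrictDerivAt 0 t).hasDerivAt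

lemma qAux_contDiff : ContDiff ℝ 1 qAux := by
  rw [contDiff_one_iff_deriv]
  constructor
  · exact fun t => (qAux_hasDerivAt t).differentiableAt
  · have : deriv qAux = psiAux := funext fun t => (qAux_hasDerivAt t).deriv
    rw [this]; exact psiAux_cont

lemma qAux_sub (a b : ℝ) : qAux b - qAux a = ∫ s in a..b, psiAux s := by
  unfold qAux
  rw [← intervalIntegral.integral_add_adjacent_intervals
    (psiAux_cont.intervalIntegrable 0 a) (psiAux_cont.intervalIntegrable a b)]
  ring

lemma qAux_mono : Monotone qAux := by
  intro a b hab
  have := qAux_sub a b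
  have hnn : 0 ≤ ∫ s in a..b, psiAux s :=
    intervalIntegral.integral_nonneg hab (fun s _ => psiAux_nonneg s)
  linarith

lemma qAux_zero_of_nonpos {t : ℝ} (ht : t ≤ 0) : qAux t = 0 := by
  have h := qAux_sub t 0
  have h0 : qAux 0 = 0 := by simp [qAux]
  have hint : (∫ s in t..0, psiAux s) = 0 := by
    rw [intervalIntegral.integral_congr (g := fun _ => (0:ℝ))]
    · simp
    · intro s hs
      rw [Set.uIcc_of_le ht] at hs
      exact psiAux_eq_zero_of_nonpos hs.2
  rw [h0, hint] at h
  linarith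

lemma qAux_one : qAux 1 = 1 := by
  unfold qAux
  have hcongr : (∫ s in (0:ℝ)..1, psiAux s) = ∫ s in (0:ℝ)..1, 6 * s - 6 * s ^ 2 := by
    apply intervalIntegral.integral_congr
    intro s hs
    rw [Set.uIcc_of_le zero_le_one] at hs
    unfold psiAux
    have h1 : min 1 s = s := min_eq_right hs.2
    have h2 : max 0 s = s := max_eq_right hs.1
    rw [h1, h2]; ring
  rw [hcongr, intervalIntegral.integral_sub, intervalIntegral.integral_const_mul,
    intervalIntegral.integral_const_mul]
  · have h1 : (∫ s in (0:ℝ)..1, s) = 1 / 2 := by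
      have := @integral_pow 0 1 1
      simpa using this
    have h2 : (∫ s in (0:ℝ)..1, s ^ 2) = 1 / 3 := by
      rw [integral_pow]; norm_num
    rw [h1, h2]; norm_num
  · exact (continuous_const.mul continuous_id).intervalIntegrable 0 1
  · exact (continuous_const.mul (continuous_pow 2)).intervalIntegrable 0 1

lemma qAux_one_of_one_le {t : ℝ} (ht : 1 ≤ t) : qAux t = 1 := by
  have h := qAux_sub 1 t
  have hint : (∫ s in (1:ℝ)..t, psiAux s) = 0 := by
    rw [intervalIntegral.integral_congr (g := fun _ => (0:ℝ))]
    · simp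
    · intro s hs
      rw [Set.uIcc_of_le ht] at hs
      exact psiAux_eq_zero_of_one_le hs.1
  rw [qAux_one, hint] at h
  linarith

lemma qAux_mem_Icc (t : ℝ) : qAux t ∈ Set.Icc (0:ℝ) 1 := by
  rcases le_or_gt t 0 with h | h
  · rw [qAux_zero_of_nonpos h]; exact ⟨le_refl _, zero_le_one⟩
  rcases le_or_gt 1 t with h1 | h1
  · rw [qAux_one_of_one_le h1]; exact ⟨zero_le_one, le_refl _⟩
  constructor
  · have := qAux_mono h.le
    rwa [qAux_zero_of_nonpos (le_refl 0)] at this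
  · have := qAux_mono h1.le
    rwa [qAux_one_of_one_le (le_refl 1)] at this

lemma qAux_lipschitz (a b : ℝ) : |qAux a - qAux b| ≤ (3 / 2) * |a - b| := by
  have h := qAux_sub b a
  have hb : ‖∫ s in b..a, psiAux s‖ ≤ (3 / 2) * |a - b| :=
    intervalIntegral.norm_integral_le_of_norm_le_const (fun s _ => by
      rw [Real.norm_eq_abs, abs_of_nonneg (psiAux_nonneg s)]; exact psiAux_le s)
  rw [Real.norm_eq_abs] at hb
  rw [h]
  exact hb

/-- If `X` has property (*) for real-valued functions with constant `C₀`, and `A, W ⊆ X`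
satisfy `dist(A, W) ≥ d > 0`, then there is a `C¹` smooth function `u : X → [0,1]` with
`u = 1` on `A`, `u = 0` on `W`, and `Lip(u) ≤ 2C₀/d`. -/
theorem smooth_urysohn_of_property_star
    {X : Type*} [NormedAddCommGroup X] [NormedSpace ℝ X] [CompleteSpace X]
    (C₀ : ℝ) (hC₀ : 1 ≤ C₀)
    (hstar : ∀ (B : Set X) (f : X → ℝ) (L : ℝ), 0 ≤ L →
      (∀ x ∈ B, ∀ y ∈ B, |f x - f y| ≤ L * ‖x - y‖) →
      ∀ ε > (0 : ℝ), ∃ g : X → ℝ, ContDiff ℝ 1 g ∧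
        (∀ x ∈ B, |f x - g x| < ε) ∧ ∀ x y : X, |g x - g y| ≤ C₀ * L * ‖x - y‖)
    (A W : Set X) (d : ℝ) (hd : 0 < d)
    (hsep : ∀ a ∈ A, ∀ w ∈ W, d ≤ ‖a - w‖) :
    ∃ u : X → ℝ, ContDiff ℝ 1 u ∧
      (∀ x : X, u x ∈ Set.Icc (0 : ℝ) 1) ∧
      (∀ a ∈ A, u a = 1) ∧ (∀ w ∈ W, u w = 0) ∧
      (∀ x y : X, |u x - u y| ≤ (2 * C₀ / d) * ‖x - y‖) := by
  classical
  set B : Set X := A ∪ W with hB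
  set f : X → ℝ := fun x => if x ∈ A then 1 else 0 with hf
  have hLip : ∀ x ∈ B, ∀ y ∈ B, |f x - f y| ≤ (1 / d) * ‖x - y‖ := by
    intro x hx y hy
    by_cases hxA : x ∈ A <;> by_cases hyA : y ∈ A
    · simp only [hf, if_pos hxA, if_pos hyA, sub_self, abs_zero]
      positivity
    · have hyW : y ∈ W := hy.resolve_left hyA
      have hdxy : d ≤ ‖x - y‖ := hsep x hxA y hyW
      simp only [hf, if_pos hxA, if_neg hyA]
      rw [sub_zero, abs_one]
      calc (1:ℝ) ≤ ‖x - y‖ / d := by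
            rw [le_div_iff₀ hd]; linarith
        _ = (1 / d) * ‖x - y‖ := by ring
    · have hxW : x ∈ W := hx.resolve_left hxA
      have hdxy : d ≤ ‖y - x‖ := hsep y hyA x hxW
      simp only [hf, if_neg hxA, if_pos hyA]
      rw [zero_sub, abs_neg, abs_one]
      rw [← norm_neg, neg_sub] at hdxy
      calc (1:ℝ) ≤ ‖x - y‖ / d := by rw [le_div_iff₀ hd]; linarith
        _ = (1 / d) * ‖x - y‖ := by ring
    · simp only [hf, if_neg hxA, if_neg hyA, sub_self, abs_zero]
      positivity
  obtain ⟨g, hg1, hg2, hg3⟩ := hstar B f (1 / d) (by positivity) hLip (1/8) (by norm_num)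
  refine ⟨fun x => qAux ((g x - 1/8) * (4/3)), ?_, ?_, ?_, ?_, ?_⟩
  · exact qAux_contDiff.comp (((hg1.sub contDiff_const).mul contDiff_const))
  · intro x; exact qAux_mem_Icc _
  · intro a ha
    have hfa : f a = 1 := if_pos ha
    have := hg2 a (Or.inl ha)
    rw [hfa] at this
    have hga : 1 ≤ (g a - 1/8) * (4/3) := by
      rw [abs_sub_lt_iff] at this
      nlinarith [this.1]
    exact qAux_one_of_one_le hga
  · intro w hw
    have hAW : w ∉ A ∨ w ∈ A := em' _
    have hfw : f w = if w ∈ A then 1 else 0 := rfl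
    have := hg2 w (Or.inr hw)
    by_cases hwA : w ∈ A
    · exfalso
      have := hsep w hwA w hw
      simp at this
      linarith
    · rw [hfw, if_neg hwA] at this
      have hgw : (g w - 1/8) * (4/3) ≤ 0 := by
        rw [abs_sub_lt_iff] at this
        nlinarith [this.2]
      exact qAux_zero_of_nonpos hgw
  · intro x y
    calc |qAux ((g x - 1/8) * (4/3)) - qAux ((g y - 1/8) * (4/3))|
        ≤ (3/2) * |(g x - 1/8) * (4/3) - (g y - 1/8) * (4/3)| := qAux_lipschitz _ _
      _ = 2 * |g x - g y| := by rw [show (g x - 1/8) * (4/3) - (g y - 1/8) * (4/3) = (4/3) * (g x - g y) by ring, abs_mul]; rw [abs_of_nonneg (by norm_num : (0:ℝ) ≤ (4:ℝ)/3)]; ring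
      _ ≤ 2 * (C₀ * (1/d) * ‖x - y‖) := by
          have := hg3 x y
          nlinarith [abs_nonneg (g x - g y), norm_nonneg (x - y)]
      _ = (2 * C₀ / d) * ‖x - y‖ := by field_simp
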